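/- In the generic-coding construction, the map x ↦ x̃ from Set ℕ to (ℕ → Bool) is injective: if x ≠ y then x̃ ≠ ỹ. -/

import Mathlib

open scoped Classical

/-- `s` is an initial segment of `g : ℕ → Bool`: the finite partial function given by `s`
agrees with `g` on its domain. -/
def InitSeg (s : List Bool) (g : ℕ → Bool) : Prop :=
  ∀ k, (h : k < s.length) → s.get ⟨k, h⟩ = g k

/-- A set of binary strings is dense if every string has an extension in it,
where `s` extends `t` iff `t` is a prefix of `s`. -/
def DenseStrings (D : Set (List Bool)) : Prop :=
  ∀ t : List Bool, ∃ s ∈ D, t <+: s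

/-- `s` properly extends `t`: `t` is a proper prefix of `s`. -/
def ProperExt (s t : List Bool) : Prop := t <+: s ∧ t ≠ s

/-- Two strings are incompatible if neither is a prefix of the other. -/
def Incompat (s t : List Bool) : Prop := ¬s <+: t ∧ ¬t <+: s

/-- The minimal element of a set of strings: the one of least code under the canonical
(`Encodable`) encoding of `List Bool` into `ℕ` (junk value `[]` if the set is empty). -/
noncomputable def minString (S : Set (List Bool)) : List Bool :=
  ((Encodable.decode (sInf (Encodable.encode '' S)) : Option (List Bool))).getD []

/-- The recursively defined sequence of conditions `c i` coding `x` along the dense family `D`: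
`c 0 = []`; `e i` is the minimal element of `D i` properly extending `c i`;
`c (i+1) = e i` if `i ∈ x`, and otherwise `c (i+1)` is the minimal element of `D i`
properly extending `c i` and incompatible with `e i`. -/
noncomputable def cSeq (D : ℕ → Set (List Bool)) (x : Set ℕ) : ℕ → List Bool
  | 0 => []
  | i + 1 =>
    let ci := cSeq D x i
    let ei := minString {s ∈ D i | ProperExt s ci}
    if i ∈ x then ei
    else minString {s ∈ D i | ProperExt s ci ∧ Incompat s ei}

/-- `e i`: the minimal element of `D i` properly extending `c i`. -/
noncomputable def eSeq (D : ℕ → Set (List Bool)) (x : Set ℕ) (i : ℕ) : List Bool :=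
  minString {s ∈ D i | ProperExt s (cSeq D x i)}

/-- `x̃`: the unique function having every `c i` as an initial segment (when each `D i` is
dense, `c (i+1)` properly extends `c i`, so `c (k+1)` has length `> k` and determines bit `k`). -/
noncomputable def tilde (D : ℕ → Set (List Bool)) (x : Set ℕ) : ℕ → Bool :=
  fun k => (cSeq D x (k + 1)).getD k false


lemma minString_mem {S : Set (List Bool)} (h : S.Nonempty) : minString S ∈ S := by
  obtain ⟨s, hs, he⟩ := Nat.sInf_mem (h.image Encodable.encode)
  unfold minString
  rw [← he, Encodable.encodek]
  simpa using hs

lemma properExt_length {s t : List Bool} (h : ProperExt s t) : t.length < s.length := by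
  rcases h with ⟨hp, hne⟩
  rcases lt_or_eq_of_le hp.length_le with h | h
  · exact h
  · exact absurd (List.IsPrefix.eq_of_length hp h) hne

lemma extSet_nonempty {Di : Set (List Bool)} (hDi : DenseStrings Di) (c : List Bool) :
    {s ∈ Di | ProperExt s c}.Nonempty := by
  obtain ⟨s, hs, hp⟩ := hDi (c ++ [false])
  have hl : c.length < s.length := by have := hp.length_le; simp at this; omega
  exact ⟨s, hs, (c.prefix_append [false]).trans hp, fun h => by simp [h] at hl⟩

lemma incompatSet_nonempty {Di : Set (List Bool)} (hDi : DenseStrings Di)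
    {c e : List Bool} (he : ProperExt e c) :
    {s ∈ Di | ProperExt s c ∧ Incompat s e}.Nonempty := by
  have hlen : c.length < e.length := properExt_length he
  set b := e[c.length]'hlen with hb
  obtain ⟨s, hs, hp⟩ := hDi (c ++ [!b])
  have hslen : c.length < s.length := by have := hp.length_le; simp at this; omega
  have hsb : s[c.length]'hslen = !b := by
    have := hp.getElem (i := c.length) (by simp)
    simpa using this.symm
  refine ⟨s, hs, ⟨(c.prefix_append [!b]).trans hp, fun h => by simp [h] at hslen⟩, ?_, ?_⟩
  · intro h
    have := h.getElem hslen
    rw [hsb, ← hb] at this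
    simp at this
  · intro h
    have := h.getElem hlen
    rw [← hb, hsb] at this
    simp at this

lemma cSeq_properExt (D : ℕ → Set (List Bool)) (hD : ∀ i, DenseStrings (D i)) (x : Set ℕ)
    (i : ℕ) : ProperExt (cSeq D x (i + 1)) (cSeq D x i) := by
  have hext := minString_mem (extSet_nonempty (hD i) (cSeq D x i))
  by_cases hx : i ∈ x
  · simp only [cSeq, if_pos hx]
    exact hext.2
  · simp only [cSeq, if_neg hx]
    exact (minString_mem (incompatSet_nonempty (hD i) hext.2)).2.1

lemma cSeq_prefix (D : ℕ → Set (List Bool)) (hD : ∀ i, DenseStrings (D i)) (x : Set ℕ)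
    {j m : ℕ} (h : j ≤ m) : cSeq D x j <+: cSeq D x m := by
  induction m with
  | zero => simp at h; simp [h]
  | succ m ih =>
    rcases Nat.lt_or_ge j (m + 1) with h' | h'
    · exact (ih (Nat.lt_succ_iff.mp h')).trans (cSeq_properExt D hD x m).1
    · have : j = m + 1 := le_antisymm h h'
      simp [this]

lemma cSeq_length (D : ℕ → Set (List Bool)) (hD : ∀ i, DenseStrings (D i)) (x : Set ℕ)
    (i : ℕ) : i ≤ (cSeq D x i).length := by
  induction i with
  | zero => simp
  | succ i ih =>
    have := properExt_length (cSeq_properExt D hD x i)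
    omega

lemma tilde_eq (D : ℕ → Set (List Bool)) (hD : ∀ i, DenseStrings (D i)) (x : Set ℕ)
    {m k : ℕ} (h : k < (cSeq D x m).length) :
    tilde D x k = (cSeq D x m)[k]'h := by
  set n := max m (k + 1) with hn
  have h1 : k < (cSeq D x (k + 1)).length := lt_of_lt_of_le (Nat.lt_succ_self k) (cSeq_length D hD x (k + 1))
  have e1 := (cSeq_prefix D hD x (le_max_right m (k + 1))).getElem h1
  have e2 := (cSeq_prefix D hD x (le_max_left m (k + 1))).getElem h
  unfold tilde
  rw [List.getD_eq_getElem _ _ h1, e1, e2]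

lemma cSeq_eq_of_agree (D : ℕ → Set (List Bool)) (x y : Set ℕ) :
    ∀ i, (∀ j, j < i → (j ∈ x ↔ j ∈ y)) → cSeq D x i = cSeq D y i := by
  intro i
  induction i with
  | zero => intro _; rfl
  | succ i ih =>
    intro h
    have ihe := ih (fun j hj => h j (Nat.lt_succ_of_lt hj))
    simp only [cSeq, ihe]
    by_cases hx : i ∈ x
    · rw [if_pos hx, if_pos ((h i (Nat.lt_succ_self i)).mp hx)]
    · rw [if_neg hx, if_neg (fun hy => hx ((h i (Nat.lt_succ_self i)).mpr hy))]

lemma key_incompat (D : ℕ → Set (List Bool)) (hD : ∀ i, DenseStrings (D i)) (x y : Set ℕ)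
    (i : ℕ) (hagree : ∀ j, j < i → (j ∈ x ↔ j ∈ y)) (hx : i ∈ x) (hy : i ∉ y) :
    Incompat (cSeq D x (i + 1)) (cSeq D y (i + 1)) := by
  have hc : cSeq D y i = cSeq D x i := (cSeq_eq_of_agree D x y i hagree).symm
  have hext := minString_mem (extSet_nonempty (hD i) (cSeq D x i))
  have hinc := minString_mem (incompatSet_nonempty (hD i) hext.2)
  have h1 : cSeq D x (i + 1) = minString {s ∈ D i | ProperExt s (cSeq D x i)} := by
    simp only [cSeq, if_pos hx]
  have h2 : cSeq D y (i + 1) = minString {s ∈ D i | ProperExt s (cSeq D x i) ∧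
      Incompat s (minString {s ∈ D i | ProperExt s (cSeq D x i)})} := by
    simp only [cSeq, if_neg hy, hc]
  rw [h1, h2]
  exact ⟨hinc.2.2.2, hinc.2.2.1⟩

lemma incompat_exists {a b : List Bool} (h : Incompat a b) :
    ∃ k, ∃ (ha : k < a.length) (hb : k < b.length), a[k]'ha ≠ b[k]'hb := by
  by_contra hcon
  push_neg at hcon
  have key : ∀ (u v : List Bool), u.length ≤ v.length →
      (∀ k, (hu : k < u.length) → (hv : k < v.length) → u[k]'hu = v[k]'hv) → u <+: v := by
    intro u v hle hag
    rw [List.prefix_iff_eq_take]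
    apply List.ext_getElem
    · simp [hle]
    · intro k h1 h2
      rw [List.getElem_take]
      exact hag k h1 (lt_of_lt_of_le h1 hle)
  rcases le_total a.length b.length with hle | hle
  · exact h.1 (key a b hle hcon)
  · exact h.2 (key b a hle (fun k h1 h2 => (hcon k h2 h1).symm))

/-- The map `x ↦ x̃` is injective: distinct `x, y` yield distinct generics. -/
theorem tilde_injective (D : ℕ → Set (List Bool)) (hD : ∀ i, DenseStrings (D i)) :
    ∀ x y : Set ℕ, x ≠ y → tilde D x ≠ tilde D y := by
  intro x y hxy htt
  have hne : ∃ i, ¬(i ∈ x ↔ i ∈ y) := by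
    by_contra h
    push_neg at h
    exact hxy (Set.ext fun i => h i)
  classical
  set i := Nat.find hne with hi
  have hspec := Nat.find_spec hne
  have hagree : ∀ j, j < i → (j ∈ x ↔ j ∈ y) := fun j hj => by
    have := Nat.find_min hne hj
    tauto
  have hinc : Incompat (cSeq D x (i + 1)) (cSeq D y (i + 1)) := by
    by_cases hx : i ∈ x
    · exact key_incompat D hD x y i hagree hx (fun hy => hspec ⟨fun _ => hy, fun _ => hx⟩)
    · have hy : i ∈ y := by tauto
      have := key_incompat D hD y x i (fun j hj => (hagree j hj).symm) hy hx
      have hc : cSeq D y i = cSeq D x i := (cSeq_eq_of_agree D x y i hagree).symm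
      exact ⟨this.2, this.1⟩
  obtain ⟨k, ha, hb, hne'⟩ := incompat_exists hinc
  have e1 := tilde_eq D hD x ha
  have e2 := tilde_eq D hD y hb
  rw [htt] at e1
  exact hne' (e1.symm.trans e2 ▸ rfl)
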